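/- There is no sublinear nondecreasing function h : ℝ≥0 → ℝ≥0 (i.e. h(t)/t → 0) that dominates all nondecreasing functions f satisfying condition (C_p): for every sublinear nondecreasing h and every p ≥ 1, there exists a nondecreasing f with ∫₁^∞ (f(t)/t)^p dt/t < ∞ and f(t_n) > h(t_n) along some sequence t_n → ∞. -/

import Mathlib

open MeasureTheory Set Filter

/-- No sublinear nondecreasing function dominates all functions satisfying `(C_p)`:
for every nondecreasing `h` with `h(t)/t → 0` and every `p ≥ 1`, there is a
nondecreasing nonnegative `f` with `∫₁^∞ (f t / t)^p dt/t < ∞` which exceeds `h`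
along a sequence tending to infinity. -/
theorem stmt19 (h : ℝ → ℝ) (hmono : Monotone h) (hnn : ∀ t, 0 ≤ h t)
    (hsub : Tendsto (fun t : ℝ => h t / t) atTop (nhds 0))
    (p : ℝ) (hp : 1 ≤ p) :
    ∃ f : ℝ → ℝ, Monotone f ∧ (∀ t, 0 ≤ f t) ∧
      IntegrableOn (fun t => (f t / t) ^ p * (1 / t)) (Ici (1 : ℝ)) ∧
      ∃ u : ℕ → ℝ, Tendsto u atTop atTop ∧ ∀ n, h (u n) < f (u n) := by
  classical
  have hp0 : (0:ℝ) < p := lt_of_lt_of_le one_pos hp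
  -- choose the sparse sequence
  have key : ∀ (n : ℕ) (a : ℝ), ∃ x, a + 1 ≤ x ∧ h x + 1 ≤ (1/2 : ℝ)^n * x := by
    intro n a
    have hpos : (0:ℝ) < (1/2:ℝ)^n / 2 := by positivity
    have h1 : ∀ᶠ x : ℝ in atTop, h x / x < (1/2:ℝ)^n / 2 :=
      hsub.eventually_lt_const hpos
    have h2 : ∀ᶠ x : ℝ in atTop, max (a + 1) (2 / ((1/2:ℝ)^n)) ≤ x :=
      eventually_ge_atTop _
    obtain ⟨x, hx1, hx2⟩ := (h1.and h2).exists
    have hxa : a + 1 ≤ x := le_trans (le_max_left _ _) hx2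
    have hxM : 2 / ((1/2:ℝ)^n) ≤ x := le_trans (le_max_right _ _) hx2
    have hM : (0:ℝ) < 2 / ((1/2:ℝ)^n) := by positivity
    have hx0 : (0:ℝ) < x := lt_of_lt_of_le hM hxM
    refine ⟨x, hxa, ?_⟩
    have h3 : h x < (1/2:ℝ)^n / 2 * x := by
      have := (div_lt_iff₀ hx0).mp hx1; linarith
    have h4 : (1:ℝ) ≤ (1/2:ℝ)^n / 2 * x := by
      rw [div_le_iff₀ (by positivity : (0:ℝ) < (1/2:ℝ)^n)] at hxM
      nlinarith [pow_pos (by norm_num : (0:ℝ) < 1/2) n]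
    nlinarith
  choose T hT1 hT2 using key
  set t : ℕ → ℝ := fun n => Nat.rec (T 0 1) (fun n ih => T (n+1) ih) n with ht_def
  have ht_succ : ∀ n, t n + 1 ≤ t (n+1) := fun n => hT1 (n+1) (t n)
  have ht_bound : ∀ n, h (t n) + 1 ≤ (1/2:ℝ)^n * t n := by
    intro n
    cases n with
    | zero => exact hT2 0 1
    | succ n => exact hT2 (n+1) (t n)
  have ht2 : ∀ n, 2 ≤ t n := by
    intro n
    induction n with
    | zero => have := hT1 0 1; show (2:ℝ) ≤ T 0 1; linarith
    | succ n ih => linarith [ht_succ n]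
  have htmono : StrictMono t :=
    strictMono_nat_of_lt_succ fun n => by linarith [ht_succ n]
  have ht_ge : ∀ n : ℕ, (n:ℝ) + 2 ≤ t n := by
    intro n
    induction n with
    | zero => simpa using ht2 0
    | succ n ih => push_cast; linarith [ht_succ n]
  have ht_top : Tendsto t atTop atTop := by
    apply tendsto_atTop_mono ht_ge
    apply tendsto_atTop_add_const_right
    exact tendsto_natCast_atTop_atTop
  -- the function f
  set c : ℕ → ℝ := fun n => h (t n) + 1 with hc_def
  have hc1 : ∀ n, (1:ℝ) ≤ c n := fun n => by
    have := hnn (t n); simp only [hc_def]; linarith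
  set F : ℕ → ℝ → ℝ := fun n x => if t n ≤ x then c n else 0 with hF_def
  have hF_nonneg : ∀ n x, 0 ≤ F n x := by
    intro n x
    simp only [hF_def]
    split
    · linarith [hc1 n]
    · exact le_rfl
  have Fbdd : ∀ x, BddAbove (range fun n => F n x) := by
    intro x
    refine ⟨h x + 1, ?_⟩
    rintro y ⟨n, rfl⟩
    simp only [hF_def]
    split
    · rename_i hx
      have := hmono hx
      simp only [hc_def]; linarith
    · linarith [hnn x]
  set f : ℝ → ℝ := fun x => ⨆ n, F n x with hf_def
  have hf_mono : Monotone f := by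
    intro x y hxy
    apply ciSup_le
    intro n
    refine le_trans ?_ (le_ciSup (Fbdd y) n)
    simp only [hF_def]
    split
    · rename_i hx
      rw [if_pos (le_trans hx hxy)]
    · split
      · linarith [hc1 n]
      · exact le_rfl
  have hf_nonneg : ∀ x, 0 ≤ f x :=
    fun x => le_trans (hF_nonneg 0 x) (le_ciSup (Fbdd x) 0)
  have hf_eval : ∀ n x, t n ≤ x → x < t (n+1) → f x = c n := by
    intro n x hx1 hx2
    apply le_antisymm
    · apply ciSup_le
      intro m
      simp only [hF_def]
      split
      · rename_i hm
        have hmn : m ≤ n := by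
          by_contra hcon
          push_neg at hcon
          have : t (n+1) ≤ t m := htmono.monotone hcon
          linarith
        have := hmono (htmono.monotone hmn)
        simp only [hc_def]; linarith
      · linarith [hc1 n]
    · refine le_trans ?_ (le_ciSup (Fbdd x) n)
      simp only [hF_def, if_pos hx1]
      exact le_rfl
  have hf_zero : ∀ x, x < t 0 → f x = 0 := by
    intro x hx
    apply le_antisymm _ (hf_nonneg x)
    apply ciSup_le
    intro n
    have : x < t n := lt_of_lt_of_le hx (htmono.monotone (Nat.zero_le n))
    simp only [hF_def, if_neg (not_le.mpr this), le_refl]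
  -- the integrand
  set g : ℝ → ℝ := fun x => (f x / x) ^ p * (1 / x) with hg_def
  have hmeasf : Measurable f := hf_mono.measurable
  have hmeasg : Measurable g := by
    simp only [hg_def]
    fun_prop
  -- value of g on the pieces
  have hg_eq : ∀ n x, t n < x → x < t (n+1) →
      g x = (c n) ^ p * x ^ (-(p+1)) := by
    intro n x hx1 hx2
    have hx0 : (0:ℝ) < x := lt_of_le_of_lt (by linarith [ht2 n] : (0:ℝ) ≤ t n) hx1
    have hfx : f x = c n := hf_eval n x hx1.le hx2
    simp only [hg_def, hfx]
    rw [Real.div_rpow (by linarith [hc1 n]) hx0.le,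
      show -(p+1) = -p + -1 by ring, Real.rpow_add hx0, Real.rpow_neg hx0.le,
      Real.rpow_neg_one]
    field_simp
  -- the inductive integral bound
  have main : ∀ N, IntegrableOn g (Ioc 1 (t N)) ∧
      (∫ x in Ioc 1 (t N), ‖g x‖) ≤ (2 - 2 * (1/2:ℝ)^N) / p := by
    intro N
    induction N with
    | zero =>
      have hzero : EqOn (fun _ : ℝ => (0:ℝ)) g (Ioo 1 (t 0)) := by
        intro x hx
        have : f x = 0 := hf_zero x hx.2
        simp only [hg_def, this, zero_div, Real.zero_rpow (by linarith : p ≠ 0), zero_mul]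
      constructor
      · rw [integrableOn_Ioc_iff_integrableOn_Ioo]
        exact (integrableOn_zero).congr_fun hzero measurableSet_Ioo
      · rw [integral_Ioc_eq_integral_Ioo]
        have : (∫ x in Ioo 1 (t 0), ‖g x‖) = ∫ x in Ioo 1 (t 0), (0:ℝ) := by
          apply setIntegral_congr_fun measurableSet_Ioo
          intro x hx
          show ‖g x‖ = 0
          rw [← hzero hx]
          simp
        rw [this]
        simp [div_nonneg, hp0.le]
    | succ N ih =>
      have h1tN : (1:ℝ) ≤ t N := by linarith [ht2 N]
      have htNle : t N ≤ t (N+1) := by linarith [ht_succ N]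
      have htN0 : (0:ℝ) < t N := by linarith
      have hcN0 : (0:ℝ) < c N := by linarith [hc1 N]
      have hexp : -(p+1) < -1 := by linarith
      have hsplit : Ioc 1 (t (N+1)) = Ioc 1 (t N) ∪ Ioc (t N) (t (N+1)) :=
        (Ioc_union_Ioc_eq_Ioc h1tN htNle).symm
      -- integrability and bound on the new piece
      have hIoi : IntegrableOn (fun x => (c N) ^ p * x ^ (-(p+1))) (Ioi (t N)) :=
        (integrableOn_Ioi_rpow_of_lt hexp htN0).const_mul _
      have heq2 : EqOn (fun x => (c N) ^ p * x ^ (-(p+1))) g (Ioo (t N) (t (N+1))) :=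
        fun x hx => (hg_eq N x hx.1 hx.2).symm
      have hint2 : IntegrableOn g (Ioc (t N) (t (N+1))) := by
        rw [integrableOn_Ioc_iff_integrableOn_Ioo]
        exact (hIoi.mono_set Ioo_subset_Ioi_self).congr_fun heq2 measurableSet_Ioo
      have hnonnegIoi : 0 ≤ᵐ[volume.restrict (Ioi (t N))]
          fun x => (c N) ^ p * x ^ (-(p+1)) := by
        filter_upwards [ae_restrict_mem measurableSet_Ioi] with x hx
        have hx0 : (0:ℝ) < x := lt_trans htN0 hx
        simp only [Pi.zero_apply]
        positivity
      have hval2 : (∫ x in Ioc (t N) (t (N+1)), ‖g x‖) ≤ (1/2:ℝ)^N / p := by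
        rw [integral_Ioc_eq_integral_Ioo]
        have e1 : (∫ x in Ioo (t N) (t (N+1)), ‖g x‖)
            = ∫ x in Ioo (t N) (t (N+1)), (c N) ^ p * x ^ (-(p+1)) := by
          apply setIntegral_congr_fun measurableSet_Ioo
          intro x hx
          have hx0 : (0:ℝ) < x := lt_trans htN0 hx.1
          show ‖g x‖ = (c N) ^ p * x ^ (-(p+1))
          rw [hg_eq N x hx.1 hx.2, Real.norm_of_nonneg (by positivity)]
        rw [e1]
        have e2 : (∫ x in Ioo (t N) (t (N+1)), (c N) ^ p * x ^ (-(p+1)))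
            ≤ ∫ x in Ioi (t N), (c N) ^ p * x ^ (-(p+1)) :=
          setIntegral_mono_set hIoi hnonnegIoi
            (HasSubset.Subset.eventuallyLE Ioo_subset_Ioi_self)
        refine le_trans e2 ?_
        rw [MeasureTheory.integral_const_mul, integral_Ioi_rpow_of_lt hexp htN0]
        have e3 : (c N) ^ p * (-t N ^ (-(p+1)+1) / (-(p+1)+1)) = (c N / t N) ^ p / p := by
          rw [show -(p+1)+1 = -p by ring, Real.rpow_neg htN0.le,
            Real.div_rpow hcN0.le htN0.le]
          field_simp
        rw [e3]
        have e4 : (c N / t N) ^ p ≤ ((1/2:ℝ)^N) ^ p := by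
          apply Real.rpow_le_rpow (by positivity) _ hp0.le
          rw [div_le_iff₀ htN0]
          exact ht_bound N
        have e5 : ((1/2:ℝ)^N) ^ p ≤ ((1/2:ℝ)^N) ^ (1:ℝ) :=
          Real.rpow_le_rpow_of_exponent_ge (by positivity)
            (pow_le_one₀ (by norm_num) (by norm_num)) hp
        rw [Real.rpow_one] at e5
        exact (div_le_div_iff_of_pos_right hp0).mpr (le_trans e4 e5)
      -- combine
      have hint : IntegrableOn g (Ioc 1 (t (N+1))) := by
        rw [hsplit]; exact ih.1.union hint2
      refine ⟨hint, ?_⟩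
      have hadd : (∫ x in Ioc 1 (t (N+1)), ‖g x‖)
          = (∫ x in Ioc 1 (t N), ‖g x‖) + ∫ x in Ioc (t N) (t (N+1)), ‖g x‖ := by
        rw [hsplit]
        exact setIntegral_union (Set.Ioc_disjoint_Ioc_of_le le_rfl) measurableSet_Ioc
          ih.1.norm hint2.norm
      rw [hadd]
      have : (2 - 2 * (1/2:ℝ)^N) / p + (1/2:ℝ)^N / p = (2 - 2 * (1/2:ℝ)^(N+1)) / p := by
        rw [← add_div]
        ring_nf
      linarith [ih.2, hval2]
  -- conclude
  refine ⟨f, hf_mono, hf_nonneg, ?_, t, ht_top, fun n => by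
    rw [hf_eval n (t n) le_rfl (htmono (Nat.lt_succ_self n))]
    simp only [hc_def]; linarith⟩
  rw [show (fun x : ℝ => (f x / x) ^ p * (1 / x)) = g from rfl,
    integrableOn_Ici_iff_integrableOn_Ioi]
  apply integrableOn_Ioi_of_intervalIntegral_norm_bounded (2/p) 1
    (fun i => (main i).1) ht_top
  filter_upwards with i
  rw [intervalIntegral.integral_of_le (by linarith [ht2 i] : (1:ℝ) ≤ t i)]
  refine le_trans (main i).2 ?_
  have hb : (2:ℝ) - 2 * (1/2:ℝ)^i ≤ 2 := by
    have : (0:ℝ) ≤ (1/2:ℝ)^i := by positivity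
    linarith
  exact (div_le_div_iff_of_pos_right hp0).mpr hb
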